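/- Define f_OV(T) := (D + (M−ℓ)(T−1) + min(G, (M−ℓ)B)) / min(D + (M−ℓ)·min(T,B), G) for positive integers T (the worst-case overall competitive ratio of the symmetric threshold policy with threshold T at the given state). Suppose T* := min((G − D)/(M−ℓ), B) is a positive integer. Then f_OV(T*) ≤ f_OV(T) for every positive integer T, and f_OV(T*) = 1 + (min(G,(M−ℓ)B) − (M−ℓ))/min(G, D + (M−ℓ)B); equivalently f_OV(T*) equals 2 − (M−ℓ)/G if G ≤ (M−ℓ)B, equals 1 + (M−ℓ)(B−1)/G if (M−ℓ)B < G ≤ D + (M−ℓ)B, and equals 1 + (M−ℓ)(B−1)/(D + (M−ℓ)B) if G > D + (M−ℓ)B. -/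

import Mathlib

/-- The overall-optimal threshold `T* = min((G-D)/(M-ℓ), B)` minimizes the worst-case
overall competitive ratio `f_OV` among all positive integer thresholds, and its value
is given by the stated closed form / case distinction. -/
theorem stmt3 (M B G ℓ : ℕ) (hM : 2 ≤ M) (hB : 1 ≤ B)
    (hBG : B < G) (hGMB : G < M * B) (hℓ : ℓ ≤ M - 1)
    (N : ℕ → ℕ) (hN0 : N 0 = 0)
    (hNpos : ∀ n, 1 ≤ n → n ≤ ℓ → 0 < N n)
    (hNmono : ∀ i j, 1 ≤ i → i ≤ j → j ≤ ℓ → N i ≤ N j)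
    (D : ℕ) (hD : D = ∑ n ∈ Finset.Icc 1 ℓ, N n)
    (fOV : ℕ → ℝ)
    (hfOV : ∀ T : ℕ, fOV T =
      ((D + (M - ℓ) * (T - 1) + min G ((M - ℓ) * B) : ℕ) : ℝ) /
      ((min (D + (M - ℓ) * min T B) G : ℕ) : ℝ))
    (Tstar : ℕ) (hTpos : 0 < Tstar)
    (hTstar : (Tstar : ℝ) = min (((G : ℝ) - (D : ℝ)) / ((M : ℝ) - (ℓ : ℝ))) (B : ℝ)) :
    (∀ T : ℕ, 0 < T → fOV Tstar ≤ fOV T) ∧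
    fOV Tstar = 1 + (((min G ((M - ℓ) * B) : ℕ) : ℝ) - ((M : ℝ) - (ℓ : ℝ))) /
      ((min G (D + (M - ℓ) * B) : ℕ) : ℝ) ∧
    (G ≤ (M - ℓ) * B → fOV Tstar = 2 - ((M : ℝ) - (ℓ : ℝ)) / (G : ℝ)) ∧
    ((M - ℓ) * B < G → G ≤ D + (M - ℓ) * B →
      fOV Tstar = 1 + ((M : ℝ) - (ℓ : ℝ)) * ((B : ℝ) - 1) / (G : ℝ)) ∧
    (D + (M - ℓ) * B < G →
      fOV Tstar = 1 + ((M : ℝ) - (ℓ : ℝ)) * ((B : ℝ) - 1) /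
        ((D : ℝ) + ((M : ℝ) - (ℓ : ℝ)) * (B : ℝ))) := by
  set k := M - ℓ with hkdef
  have hℓM : ℓ ≤ M := by omega
  have hk1 : 1 ≤ k := by omega
  have hkcast : (k : ℝ) = (M:ℝ) - (ℓ:ℝ) := by
    rw [hkdef, Nat.cast_sub hℓM]
  have hkpos : (0:ℝ) < (k:ℝ) := by exact_mod_cast hk1
  have hTB : Tstar ≤ B := by
    have h : (Tstar:ℝ) ≤ (B:ℝ) := by rw [hTstar]; exact min_le_right _ _
    exact_mod_cast h
  have hTG : (Tstar:ℝ) ≤ ((G:ℝ)-(D:ℝ))/(k:ℝ) := by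
    rw [hkcast, hTstar]; exact min_le_left _ _
  have hDkG : D + k * Tstar ≤ G := by
    have h1 : (Tstar:ℝ) * k ≤ (G:ℝ) - D := (le_div_iff₀ hkpos).mp hTG
    have h2 : ((D + k * Tstar : ℕ):ℝ) ≤ (G:ℝ) := by push_cast; linarith
    exact_mod_cast h2
  have hkT : k ≤ k * Tstar := Nat.le_mul_of_pos_right k hTpos
  have hkG : k ≤ G := by omega
  have hQmax : D + k * Tstar = min G (D + k * B) := by
    rcases le_or_gt (((G:ℝ)-(D:ℝ))/(k:ℝ)) (B:ℝ) with h | h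
    · have hT : (Tstar:ℝ) = ((G:ℝ)-(D:ℝ))/(k:ℝ) := by
        rw [hTstar, ← hkcast, min_eq_left h]
      have hG : ((D + k * Tstar : ℕ):ℝ) = (G:ℝ) := by
        push_cast; rw [hT]; field_simp; ring
      have hGn : D + k * Tstar = G := by exact_mod_cast hG
      have hle : k * Tstar ≤ k * B := Nat.mul_le_mul_left k hTB
      rw [hGn]; exact (min_eq_left (by omega)).symm
    · have hT : (Tstar:ℝ) = (B:ℝ) := by
        rw [hTstar, ← hkcast, min_eq_right h.le]
      have hTn : Tstar = B := by exact_mod_cast hT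
      subst hTn
      exact (min_eq_right hDkG).symm
  set m := min G (k * B) with hm
  set Qm := min G (D + k * B) with hQmdef
  have hkm : k ≤ m := le_min hkG (Nat.le_mul_of_pos_right k hB)
  have hQm0 : 0 < Qm := lt_min (by omega) (by omega)
  have hmul : ∀ t : ℕ, 1 ≤ t → k * (t - 1) + k = k * t := by
    intro t ht
    have h : t - 1 + 1 = t := Nat.succ_pred_eq_of_pos ht
    conv_rhs => rw [← h]
    ring
  have hmulT := hmul Tstar hTpos
  have hnum : D + k * (Tstar - 1) + m = Qm + (m - k) := by omega
  have hden : min (D + k * min Tstar B) G = Qm := by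
    rw [min_eq_left hTB, min_eq_left hDkG]; exact hQmax
  have hfT : fOV Tstar = ((Qm + (m - k) : ℕ):ℝ) / ((Qm : ℕ):ℝ) := by
    rw [hfOV, hnum, hden]
  have hQmR : (0:ℝ) < (Qm:ℝ) := by exact_mod_cast hQm0
  have hfTval : fOV Tstar = 1 + ((m:ℝ) - (k:ℝ)) / ((Qm:ℝ)) := by
    rw [hfT, Nat.cast_add, Nat.cast_sub hkm]
    field_simp
  refine ⟨?_, ?_, ?_, ?_, ?_⟩
  · -- optimality
    intro T hT
    rw [hfT, hfOV]
    have hmulT2 := hmul T hT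
    have hQT0 : 0 < min (D + k * min T B) G := by
      have h1 : 1 ≤ k * min T B := by
        have : 1 ≤ min T B := le_min hT hB
        calc 1 = 1 * 1 := by ring
        _ ≤ k * min T B := Nat.mul_le_mul hk1 this
      exact lt_min (by omega) (by omega)
    rw [div_le_div_iff₀ hQmR (by exact_mod_cast hQT0)]
    have key : (Qm + (m - k)) * min (D + k * min T B) G
        ≤ (D + k * (T - 1) + m) * Qm := by
      rcases le_total T Tstar with hle | hle
      · have hmTT : min T B = T := min_eq_left (le_trans hle hTB)
        have hkTle : k * T ≤ k * Tstar := Nat.mul_le_mul_left k hle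
        have hQTeq : min (D + k * min T B) G = D + k * T := by
          rw [hmTT]; exact min_eq_left (by omega)
        have hNTeq : D + k * (T - 1) + m = (D + k * T) + (m - k) := by omega
        rw [hQTeq, hNTeq]
        have hQle : D + k * T ≤ Qm := by omega
        have hs : (m - k) * (D + k * T) ≤ (m - k) * Qm :=
          Nat.mul_le_mul le_rfl hQle
        calc (Qm + (m - k)) * (D + k * T)
            = (D + k * T) * Qm + (m - k) * (D + k * T) := by ring
          _ ≤ (D + k * T) * Qm + (m - k) * Qm := Nat.add_le_add_left hs _
          _ = (D + k * T + (m - k)) * Qm := by ring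
      · have hQle : min (D + k * min T B) G ≤ Qm := by
          rw [hQmdef, min_comm G]
          refine min_le_min ?_ le_rfl
          have : k * min T B ≤ k * B := Nat.mul_le_mul le_rfl (min_le_right T B)
          omega
        have hkTle : k * Tstar ≤ k * T := Nat.mul_le_mul_left k hle
        have hNle : Qm + (m - k) ≤ D + k * (T - 1) + m := by omega
        exact Nat.mul_le_mul hNle hQle
    exact_mod_cast key
  · rw [hfTval, hkcast]
  · intro h3
    have hm3 : m = G := min_eq_left h3
    have hQ3 : Qm = G := min_eq_left (by omega)
    rw [hfTval, hm3, hQ3, hkcast]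
    have hG0 : (0:ℝ) < (G:ℝ) := by exact_mod_cast (by omega : 0 < G)
    field_simp
    ring
  · intro h1 h2
    have hm4 : m = k * B := min_eq_right h1.le
    have hQ4 : Qm = G := min_eq_left h2
    rw [hfTval, hm4, hQ4]
    have hG0 : (0:ℝ) < (G:ℝ) := by exact_mod_cast (by omega : 0 < G)
    rw [← hkcast]
    push_cast
    field_simp
  · intro h5
    have hkB : k * B ≤ D + k * B := by omega
    have hm5 : m = k * B := min_eq_right (by omega)
    have hQ5 : Qm = D + k * B := min_eq_right h5.le
    rw [hfTval, hm5, hQ5, ← hkcast]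
    have hpos : (0:ℝ) < (D:ℝ) + (k:ℝ) * (B:ℝ) := by
      have h1 : (1:ℝ) ≤ (k:ℝ) * (B:ℝ) := by
        exact_mod_cast (Nat.one_le_iff_ne_zero.mpr (by positivity) :
          1 ≤ k * B)
      have hD0 : (0:ℝ) ≤ (D:ℝ) := Nat.cast_nonneg D
      linarith
    push_cast
    field_simp
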